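/- Let N ≥ 4. Define γ̄, δ̄ ∈ ℚ[s,t] by γ̄(s,t) = Σ_{i+2j=N+1, j≥1} i·a_{i,j} s^{i−1} t^{j−1} and δ̄(s,t) = Σ_{i+2j=N+1, j≥2} j·a_{i,j} s^{i} t^{j−2}. Then in ℚ[x,y] the element (N+1)·(x+y)^{N−1}·δ̄(x+y, xy) + (N+1)·(x+y)^{N−2}·γ̄(x+y, xy) + (N+1)²·π_{N−2,N−2}(x,y) lies in the ideal of ℚ[x,y] generated by π_{N−1,0}(x,y) and π_{N,0}(x,y). (Equivalently, the determinant of the matrix [[ᾱ, β̄],[γ̄, δ̄]], with ᾱ = (N+1)s^{N−1} and β̄ = −(N+1)s^{N−2}, equals −(N+1)²·π_{N−2,N−2} in the ring ℚ[s,t]/⟨π_{N−1,0}, π_{N,0}⟩ presenting the cohomology of the Grassmannian G_{2,N}.) -/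

import Mathlib

open MvPolynomial

/-- The two-variable Schur polynomial `π_{i,j}(x,y) = Σ_{ℓ=j}^{i} x^ℓ y^{i+j−ℓ}` in `ℚ[x,y]`,
for integers `i ≥ j ≥ 0`. -/
noncomputable def schur2 (i j : ℕ) : MvPolynomial (Fin 2) ℚ :=
  ∑ ℓ ∈ Finset.Icc j i, X 0 ^ ℓ * X 1 ^ (i + j - ℓ)

/-- The coefficients `a_{i,j}` (with `i + 2j = N+1`, recorded as a function of `j`) of the
polynomial `W(s,t) = Σ_{i+2j=N+1} a_{i,j} s^i t^j`:  `a_{N+1,0} = 1` and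
`a_{N+1−2j,j} = ((−1)^j / j)·(N+1)·C(N−j, j−1)` for `1 ≤ j ≤ (N+1)/2`. -/
noncomputable def aW (N : ℕ) : ℕ → ℚ := fun j =>
  if j = 0 then 1
  else ((-1 : ℚ) ^ j / (j : ℚ)) * ((N : ℚ) + 1) * (((N - j).choose (j - 1) : ℕ) : ℚ)

/-- `γ̄(s,t) = Σ_{i+2j=N+1, j≥1} i·a_{i,j} s^{i−1} t^{j−1}`, evaluated at `s = x+y`, `t = xy`. -/
noncomputable def gammaBar (N : ℕ) : MvPolynomial (Fin 2) ℚ :=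
  ∑ j ∈ Finset.Icc 1 ((N + 1) / 2),
    C (((N + 1 - 2 * j : ℕ) : ℚ) * aW N j)
      * (X 0 + X 1) ^ (N + 1 - 2 * j - 1) * (X 0 * X 1) ^ (j - 1)

/-- `δ̄(s,t) = Σ_{i+2j=N+1, j≥2} j·a_{i,j} s^{i} t^{j−2}`, evaluated at `s = x+y`, `t = xy`. -/
noncomputable def deltaBar (N : ℕ) : MvPolynomial (Fin 2) ℚ :=
  ∑ j ∈ Finset.Icc 2 ((N + 1) / 2),
    C ((j : ℚ) * aW N j) * (X 0 + X 1) ^ (N + 1 - 2 * j) * (X 0 * X 1) ^ (j - 2)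


lemma schur2_zero : schur2 0 0 = 1 := by simp [schur2]

lemma schur2_one : schur2 1 0 = X 0 + X 1 := by
  rw [schur2, show Finset.Icc 0 1 = {0, 1} from rfl]
  simp
  ring

lemma schur2_diag (m : ℕ) : schur2 m m = (X 0 * X 1) ^ m := by
  simp [schur2, mul_pow, show m + m - m = m by omega]

lemma schur2_peel (n : ℕ) : schur2 (n+1) 0 = X 1 ^ (n+1) + X 0 * schur2 n 0 := by
  have h : Finset.Icc 0 (n+1) = Finset.range (n+2) := by
    ext x; simp [Nat.lt_succ_iff]
  have h2 : Finset.Icc 0 n = Finset.range (n+1) := by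
    ext x; simp [Nat.lt_succ_iff]
  rw [schur2, schur2, h, h2, Finset.sum_range_succ' (fun ℓ => X 0 ^ ℓ * X 1 ^ (n + 1 + 0 - ℓ)), Finset.mul_sum]
  rw [add_comm]
  congr 1
  · simp
  · apply Finset.sum_congr rfl
    intro i hi
    simp only [Finset.mem_range] at hi
    rw [show n + 1 + 0 - (i+1) = n + 0 - i by omega]
    ring

lemma schur2_rec (n : ℕ) : schur2 (n+2) 0 = (X 0 + X 1) * schur2 (n+1) 0 - (X 0 * X 1) * schur2 n 0 := by
  rw [schur2_peel (n+1), schur2_peel n]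
  ring

noncomputable def hterm (n j : ℕ) : MvPolynomial (Fin 2) ℚ :=
  C ((-1 : ℚ)^j * ((n - j).choose j : ℕ)) * (X 0 + X 1) ^ (n - 2*j) * (X 0 * X 1) ^ j

lemma schur2_closed (n : ℕ) : schur2 n 0 = ∑ j ∈ Finset.range (n+1), hterm n j := by
  induction n using Nat.strong_induction_on with
  | _ n ih =>
    match n with
    | 0 => simp [schur2_zero, hterm]
    | 1 =>
      rw [schur2_one]
      rw [Finset.sum_range_succ, Finset.sum_range_one]
      simp [hterm]
    | (n+2) =>
      rw [schur2_rec, ih (n+1) (by omega), ih n (by omega)]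
      rw [Finset.mul_sum, Finset.mul_sum]
      -- extend s-sum to range (n+3)
      have hs : ∑ j ∈ Finset.range (n+2), (X 0 + X 1) * hterm (n+1) j
          = ∑ j ∈ Finset.range (n+3), (X 0 + X 1) * hterm (n+1) j := by
        rw [Finset.sum_range_succ (fun j => (X 0 + X 1) * hterm (n+1) j) (n+2)]
        have : hterm (n+1) (n+2) = 0 := by
          simp [hterm, Nat.choose_eq_zero_of_lt (by omega : n+1-(n+2) < n+2)]
        rw [this]; ring
      -- reindex t-sum
      have ht : ∑ j ∈ Finset.range (n+1), (X 0 * X 1) * hterm n j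
          = ∑ j ∈ Finset.range (n+3), (fun j => match j with
              | 0 => (0 : MvPolynomial (Fin 2) ℚ)
              | (k+1) => (X 0 * X 1) * hterm n k) j := by
        rw [Finset.sum_range_succ' _ (n+2), Finset.sum_range_succ _ (n+1)]
        have : hterm n (n+1) = 0 := by
          simp [hterm, Nat.choose_eq_zero_of_lt (by omega : n-(n+1) < n+1)]
        simp [this]
      rw [hs, ht, ← Finset.sum_sub_distrib]
      apply Finset.sum_congr rfl
      intro j hj
      simp only [Finset.mem_range] at hj
      match j with
      | 0 =>
        simp only [hterm]
        norm_num
        ring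
      | (k+1) =>
        simp only [hterm]
        rcases lt_trichotomy (2*k+2) (n+2) with hc | hc | hc
        · -- generic case: all exponents fine, Pascal
          have hcoef : ((-1:ℚ))^(k+1) * (((n+2)-(k+1)).choose (k+1) : ℚ)
              = (-1:ℚ)^(k+1) * (((n+1)-(k+1)).choose (k+1) : ℚ)
                - (-1:ℚ)^k * (((n:ℕ)-k).choose k : ℚ) := by
            rw [show n+2-(k+1) = (n-k)+1 by omega, show n+1-(k+1) = n-k by omega,
                Nat.choose_succ_succ' (n-k) k]
            push_cast
            ring
          rw [hcoef, map_sub,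
              show n+2 - 2*(k+1) = (n+1 - 2*(k+1)) + 1 by omega,
              show n - 2*k = (n+1 - 2*(k+1)) + 1 by omega]
          ring
        · -- 2k = n : LHS coeff 1, first RHS 0, second survives
          have h1 : n + 2 - (k+1) = k+1 := by omega
          have h2 : n + 1 - (k+1) = k := by omega
          have h3 : n - k = k := by omega
          rw [h1, h2, h3, Nat.choose_self, Nat.choose_succ_self]
          rw [show n + 2 - 2*(k+1) = 0 by omega, show n + 1 - 2*(k+1) = 0 by omega,
              show n - 2*k = 0 by omega]
          simp
          ring
        · -- 2k > n : everything 0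
          rw [Nat.choose_eq_zero_of_lt (by omega : n+2-(k+1) < k+1),
              Nat.choose_eq_zero_of_lt (by omega : n+1-(k+1) < k+1),
              Nat.choose_eq_zero_of_lt (by omega : n-k < k)]
          simp

lemma tmul_gammaBar (N : ℕ) (hN : 1 ≤ N) :
    (X 0 * X 1) * gammaBar N = C ((N : ℚ) + 1) * (schur2 N 0 - (X 0 + X 1) ^ N) := by
  rw [schur2_closed N, Finset.sum_range_succ' (hterm N) N]
  have h0 : hterm N 0 = (X 0 + X 1) ^ N := by simp [hterm]
  rw [h0, add_sub_cancel_right, Finset.mul_sum, gammaBar, Finset.mul_sum]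
  rw [show Finset.Icc 1 ((N+1)/2) = Finset.Ico 1 ((N+1)/2 + 1) by rw [Finset.Ico_add_one_right_eq_Icc]]
  rw [Finset.sum_subset
      (show Finset.Ico 1 ((N+1)/2 + 1) ⊆ Finset.Ico 1 (N+1) by
        apply Finset.Ico_subset_Ico le_rfl; omega)
      (by
        intro j hj hnj
        have : (N + 1 - 2 * j : ℕ) = 0 := by
          simp only [Finset.mem_Ico] at hj hnj
          omega
        rw [this]
        simp)]
  rw [Finset.sum_Ico_eq_sum_range]
  simp only [add_tsub_cancel_left]
  apply Finset.sum_congr rfl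
  intro k hk
  simp only [Finset.mem_range] at hk
  rw [show 1 + k = k + 1 by omega]
  rw [hterm, aW]
  simp only [Nat.succ_ne_zero, if_false, Nat.add_sub_cancel]
  by_cases hstep : 2 * (k+1) ≤ N
  · have hq : (((N-(k+1)).choose (k+1) : ℕ) : ℚ) * ((k:ℚ)+1)
        = (((N-(k+1)).choose k : ℕ) : ℚ) * ((N + 1 - 2*(k+1) : ℕ) : ℚ) := by
      have hnat : (N-(k+1)).choose (k+1) * (k+1) = (N-(k+1)).choose k * (N+1-2*(k+1)) := by
        have h := Nat.choose_succ_right_eq (N-(k+1)) k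
        rw [h, show N - (k+1) - k = N+1-2*(k+1) by omega]
      exact_mod_cast hnat
    rw [show N + 1 - 2*(k+1) - 1 = N - 2*(k+1) by omega]
    have hcoef : ((N + 1 - 2 * (k+1) : ℕ) : ℚ) * ((-1:ℚ)^(k+1) / ((k+1:ℕ):ℚ) * ((N:ℚ)+1) * (((N-(k+1)).choose k : ℕ) : ℚ))
        = ((N:ℚ)+1) * ((-1:ℚ)^(k+1) * (((N-(k+1)).choose (k+1) : ℕ) : ℚ)) := by
      have hkQ : ((k+1:ℕ) : ℚ) ≠ 0 := by positivity
      field_simp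
      push_cast
      linear_combination (-1:ℚ) * hq
    rw [hcoef, map_mul]
    ring
  · rw [show (N+1-2*(k+1) : ℕ) = 0 by omega,
        Nat.choose_eq_zero_of_lt (show N - (k+1) < k+1 by omega)]
    simp

lemma tmul_deltaBar (M : ℕ) :
    (X 0 * X 1) * deltaBar (M+1)
      = C (((M+1 : ℕ) : ℚ) + 1) * ((X 0 + X 1) ^ M - schur2 M 0) := by
  rw [schur2_closed M, Finset.sum_range_succ' (hterm M) M]
  have h0 : hterm M 0 = (X 0 + X 1) ^ M := by simp [hterm]
  rw [h0, show (X 0 + X 1) ^ M - (∑ j ∈ Finset.range M, hterm M (j+1) + (X 0 + X 1) ^ M)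
      = ∑ j ∈ Finset.range M, -hterm M (j+1) by rw [Finset.sum_neg_distrib]; ring]
  rw [deltaBar, Finset.mul_sum, Finset.mul_sum]
  rw [show Finset.Icc 2 ((M+1+1)/2) = Finset.Ico 2 ((M+2)/2 + 1) by rw [Finset.Ico_add_one_right_eq_Icc]]
  rw [Finset.sum_subset
      (show Finset.Ico 2 ((M+2)/2 + 1) ⊆ Finset.Ico 2 (M+2) by
        apply Finset.Ico_subset_Ico le_rfl; omega)
      (by
        intro j hj hnj
        simp only [Finset.mem_Ico] at hj hnj
        rw [aW]
        simp only [show j ≠ 0 by omega, if_false]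
        rw [Nat.choose_eq_zero_of_lt (show M + 1 - j < j - 1 by omega)]
        simp)]
  rw [Finset.sum_Ico_eq_sum_range]
  simp only [show M + 2 - 2 = M from rfl]
  apply Finset.sum_congr rfl
  intro k hk
  rw [aW]
  simp only [show 2 + k ≠ 0 by omega, if_false]
  rw [show M + 1 + 1 - 2 * (2 + k) = M - 2*(k+1) by omega,
      show (2 + k) - 2 = k from by omega,
      show (2 + k) - 1 = k + 1 from by omega,
      show M + 1 - (2 + k) = M - (k+1) by omega]
  have hcoef : ((2+k : ℕ):ℚ) * ((-1:ℚ)^(2+k) / ((2+k : ℕ):ℚ) * (((M:ℚ)+1)+1) * (((M-(k+1)).choose (k+1) : ℕ) : ℚ))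
      = (((M+1:ℕ):ℚ)+1) * -((-1:ℚ)^(k+1) * (((M-(k+1)).choose (k+1) : ℕ) : ℚ)) := by
    have h2k : ((2+k : ℕ):ℚ) ≠ 0 := by positivity
    push_cast
    field_simp
    ring
  push_cast at hcoef ⊢
  rw [hcoef, hterm]
  simp only [map_mul, map_neg, C_neg]
  ring

lemma pi_mem (m r : ℕ) :
    schur2 (m+3+r) 0 ∈ Ideal.span {schur2 (m+3) 0, schur2 (m+4) 0} := by
  induction r using Nat.strong_induction_on with
  | _ r ih =>
    match r with
    | 0 => exact Ideal.subset_span (Set.mem_insert _ _)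
    | 1 => exact Ideal.subset_span (Set.mem_insert_of_mem _ rfl)
    | (r+2) =>
      rw [show m+3+(r+2) = (m+3+r)+2 by omega, schur2_rec (m+3+r)]
      apply Ideal.sub_mem
      · exact Ideal.mul_mem_left _ _ (by rw [show m+3+r+1 = m+3+(r+1) by omega]; exact ih (r+1) (by omega))
      · exact Ideal.mul_mem_left _ _ (ih r (by omega))

lemma tpow_pi_mem (m : ℕ) : ∀ k r : ℕ, m + 3 ≤ r + k →
    (X 0 * X 1) ^ k * schur2 r 0 ∈ Ideal.span {schur2 (m+3) 0, schur2 (m+4) 0} := by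
  intro k
  induction k with
  | zero =>
    intro r hr
    rw [pow_zero, one_mul]
    rw [show r = m+3+(r-(m+3)) by omega]
    exact pi_mem m _
  | succ k ih =>
    intro r hr
    by_cases hcase : m + 3 ≤ r + k
    · have h : (X 0 * X 1) ^ (k+1) * schur2 r 0
          = (X 0 * X 1) * ((X 0 * X 1) ^ k * schur2 r 0) := by ring
      rw [h]
      exact Ideal.mul_mem_left _ _ (ih r hcase)
    · -- r + k = m + 2 exactly
      have h : (X 0 * X 1) ^ (k+1) * schur2 r 0
          = (X 0 + X 1) * ((X 0 * X 1) ^ k * schur2 (r+1) 0)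
            - (X 0 * X 1) ^ k * schur2 (r+2) 0 := by
        rw [schur2_rec r]; ring
      rw [h]
      exact Ideal.sub_mem _
        (Ideal.mul_mem_left _ _ (ih (r+1) (by omega)))
        (ih (r+2) (by omega))

lemma key_mem (m : ℕ) : ∀ k d : ℕ, d + k = m + 2 →
    (X 0 + X 1) ^ k * schur2 (m+2) 0 - (X 0 * X 1) ^ k * schur2 d 0
      ∈ Ideal.span {schur2 (m+3) 0, schur2 (m+4) 0} := by
  intro k
  induction k with
  | zero =>
    intro d hd
    rw [show d = m + 2 by omega]
    simp
  | succ k ih =>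
    intro d hd
    have hrec := schur2_rec d
    have h : (X 0 + X 1) ^ (k+1) * schur2 (m+2) 0 - (X 0 * X 1) ^ (k+1) * schur2 d 0
        = (X 0 + X 1) * ((X 0 + X 1) ^ k * schur2 (m+2) 0 - (X 0 * X 1) ^ k * schur2 (d+1) 0)
          + (X 0 * X 1) ^ k * schur2 (d+2) 0 := by
      rw [hrec]; ring
    rw [h]
    exact Ideal.add_mem _
      (Ideal.mul_mem_left _ _ (ih (d+1) (by omega)))
      (tpow_pi_mem m k (d+2) (by omega))


/-- For `N ≥ 4`, the element
`(N+1)·(x+y)^{N−1}·δ̄(x+y,xy) + (N+1)·(x+y)^{N−2}·γ̄(x+y,xy) + (N+1)²·π_{N−2,N−2}(x,y)`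
lies in the ideal of `ℚ[x,y]` generated by `π_{N−1,0}` and `π_{N,0}`; equivalently, the
determinant `ᾱδ̄ − β̄γ̄` (with `ᾱ = (N+1)s^{N−1}`, `β̄ = −(N+1)s^{N−2}`) equals
`−(N+1)²·π_{N−2,N−2}` in the cohomology ring of the Grassmannian `G_{2,N}`. -/
theorem det_bar_eq_top_schur (N : ℕ) (hN : 4 ≤ N) :
    C ((N : ℚ) + 1) * (X 0 + X 1) ^ (N - 1) * deltaBar N
      + C ((N : ℚ) + 1) * (X 0 + X 1) ^ (N - 2) * gammaBar N
      + C (((N : ℚ) + 1) ^ 2) * schur2 (N - 2) (N - 2)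
      ∈ Ideal.span {schur2 (N - 1) 0, schur2 N 0} := by
  obtain ⟨m, rfl⟩ : ∃ m, N = m + 4 := ⟨N - 4, by omega⟩
  rw [show m + 4 - 1 = m + 3 by omega, show m + 4 - 2 = m + 2 by omega, schur2_diag]
  set I := Ideal.span {schur2 (m+3) 0, schur2 (m+4) 0} with hI
  have h1 := tmul_deltaBar (m+3)
  have h2 := tmul_gammaBar (m+4) (by omega)
  have h3 := schur2_rec (m+2)
  have hc : ((m+3+1 : ℕ) : ℚ) + 1 = ((m+4 : ℕ) : ℚ) + 1 := by push_cast; ring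
  rw [hc] at h1
  have hX : (X 0 * X 1 : MvPolynomial (Fin 2) ℚ) ≠ 0 :=
    mul_ne_zero (X_ne_zero 0) (X_ne_zero 1)
  have hkey : (X 0 * X 1) *
      (C (((m+4 : ℕ) : ℚ) + 1) * (X 0 + X 1) ^ (m + 3) * deltaBar (m+4)
        + C (((m+4 : ℕ) : ℚ) + 1) * (X 0 + X 1) ^ (m + 2) * gammaBar (m+4)
        + C ((((m+4 : ℕ) : ℚ) + 1) ^ 2) * (X 0 * X 1) ^ (m + 2))
      = (X 0 * X 1) *
      (C ((((m+4 : ℕ) : ℚ) + 1) ^ 2)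
        * ((X 0 * X 1) ^ (m+2) - (X 0 + X 1) ^ (m+2) * schur2 (m+2) 0)) := by
    rw [map_pow]
    have hd : deltaBar (m+3+1) = deltaBar (m+4) := by norm_num
    rw [hd] at h1
    linear_combination (C (((m+4 : ℕ) : ℚ) + 1) * (X 0 + X 1) ^ (m + 3)) * h1
      + (C (((m+4 : ℕ) : ℚ) + 1) * (X 0 + X 1) ^ (m + 2)) * h2
      + (C (((m+4 : ℕ) : ℚ) + 1) ^ 2 * (X 0 + X 1) ^ (m + 2)) * h3
  have heq := mul_left_cancel₀ hX hkey
  rw [heq]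
  have hmem := key_mem m (m+2) 0 (by omega)
  rw [schur2_zero, mul_one] at hmem
  have : C ((((m+4 : ℕ) : ℚ) + 1) ^ 2)
        * ((X 0 * X 1) ^ (m+2) - (X 0 + X 1) ^ (m+2) * schur2 (m+2) 0)
      = C ((((m+4 : ℕ) : ℚ) + 1) ^ 2)
        * -((X 0 + X 1) ^ (m+2) * schur2 (m+2) 0 - (X 0 * X 1) ^ (m+2)) := by ring
  rw [this]
  exact Ideal.mul_mem_left _ _ (Submodule.neg_mem _ hmem)
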